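/- Suppose f : E → ℝ is (L₀,L₁)-smooth with respect to ‖·‖ with f* := inf f > −∞ and Δ := f(x¹) − f*. Consider the GGNC iterates x^{k+1} = x^k − γη_k v^k with v^k = −lmo(d^k), η_k = min{ρ, ⟨d^k, v^k⟩}, constant stepsize γ ≤ 1/L₀ and γρ ≤ 1/(2L₁), where d^k = α_k·g_k + (1−α_k)·d^{k−1}, d⁰ = 0, and g_k is a conditionally unbiased stochastic gradient at x^k with conditional variance (in ‖·‖₂) at most σ². Let λ^k := d^k − ∇f(x^k), ζ := sup_{x≠0} ‖x‖_*/‖x‖₂, and ε_n := (1/n)·Σ_{k=1}^n [ (7/4)ρζ·√(E[‖λ^k‖₂²]) + (ζ/4)·E[‖λ^k‖₂²] ]. Then (1/n)·Σ_{k=1}^n E[‖∇f(x^k)‖_*] ≤ 4√Δ/√(γn) + 8Δ/(γρn) + 4√(ε_n) + 8ε_n/ρ. -/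

import Mathlib

open MeasureTheory
open scoped RealInnerProductSpace

set_option maxHeartbeats 1000000

lemma ggnc_aux_h_mono (ρ a b c : ℝ) (hρ : 0 < ρ) (ha : 0 ≤ a) (hb : 0 ≤ b) (hc : 0 ≤ c)
    (hbac : b ≤ a + c) : min ρ b * b ≤ min ρ a * a + 3 * (ρ * c) := by
  rcases le_total ρ b with h1 | h1 <;> rcases le_total ρ a with h2 | h2
  · rw [min_eq_left h1, min_eq_left h2]; nlinarith
  · rw [min_eq_left h1, min_eq_right h2]
    nlinarith [mul_nonneg (by linarith : (0:ℝ) ≤ a + c - ρ) ha,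
      mul_nonneg (sub_nonneg.2 h2) hc]
  · rw [min_eq_right h1, min_eq_left h2]; nlinarith
  · rw [min_eq_right h1, min_eq_right h2]
    rcases le_total c ρ with h3 | h3
    · nlinarith [mul_self_le_mul_self hb hbac, mul_nonneg (sub_nonneg.2 h2) hc]
    · nlinarith [mul_self_le_mul_self hb h1]

lemma ggnc_aux_t_le (ρ t : ℝ) (hρ : 0 < ρ) (ht : 0 ≤ t) :
    t ≤ Real.sqrt (min ρ t * t) + (min ρ t * t) / ρ := by
  rcases le_total t ρ with h | h
  · rw [min_eq_right h, Real.sqrt_mul_self ht]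
    have : 0 ≤ t * t / ρ := by positivity
    linarith
  · rw [min_eq_left h]
    have h2 : ρ * t / ρ = t := by field_simp
    have := Real.sqrt_nonneg (ρ * t)
    linarith

lemma ggnc_aux_sqrt_add (a b : ℝ) (ha : 0 ≤ a) (hb : 0 ≤ b) :
    Real.sqrt (a + b) ≤ Real.sqrt a + Real.sqrt b := by
  have h1 := Real.sq_sqrt ha
  have h2 := Real.sq_sqrt hb
  have h3 := Real.sqrt_nonneg a
  have h4 := Real.sqrt_nonneg b
  have h5 : a + b ≤ (Real.sqrt a + Real.sqrt b) ^ 2 := by nlinarith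
  calc Real.sqrt (a + b) ≤ Real.sqrt ((Real.sqrt a + Real.sqrt b) ^ 2) := Real.sqrt_le_sqrt h5
    _ = Real.sqrt a + Real.sqrt b := Real.sqrt_sq (by positivity)

lemma ggnc_aux_EX_le_sqrt {Ω : Type*} {mΩ : MeasurableSpace Ω} (μ : Measure Ω)
    [IsProbabilityMeasure μ] (X : Ω → ℝ) (hm : AEStronglyMeasurable X μ)
    (hnn : 0 ≤ ∫ ω, X ω ∂μ) (hint : Integrable (fun ω => X ω ^ 2) μ) :
    ∫ ω, X ω ∂μ ≤ Real.sqrt (∫ ω, X ω ^ 2 ∂μ) := by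
  have h2 : MemLp X 2 μ := (memLp_two_iff_integrable_sq hm).2 hint
  have h3 := ProbabilityTheory.variance_nonneg X μ
  rw [ProbabilityTheory.variance_eq_sub h2] at h3
  have h4 : (∫ ω, X ω ∂μ) ^ 2 ≤ ∫ ω, X ω ^ 2 ∂μ := by
    simpa using h3
  calc ∫ ω, X ω ∂μ = Real.sqrt ((∫ ω, X ω ∂μ) ^ 2) := (Real.sqrt_sq hnn).symm
    _ ≤ _ := Real.sqrt_le_sqrt h4

lemma ggnc_step {E : Type*} [NormedAddCommGroup E] [InnerProductSpace ℝ E]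
    (Nm : E → ℝ)
    (hNm_nonneg : ∀ z : E, 0 ≤ Nm z)
    (hNmsmul : ∀ (a : ℝ) (z : E), Nm (a • z) = |a| * Nm z)
    (Dstar : E → ℝ)
    (hDle : ∀ u w : E, Nm w ≤ 1 → ⟪u, w⟫ ≤ Dstar u)
    (hD0 : ∀ u : E, 0 ≤ Dstar u)
    (hDadd : ∀ u v : E, Dstar (u + v) ≤ Dstar u + Dstar v)
    (lmo : E → E)
    (hlmo1 : ∀ d : E, Nm (lmo d) ≤ 1)
    (hlmo_eq : ∀ d : E, ⟪d, lmo d⟫ = -(Dstar d))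
    (f : E → ℝ) (f' : E → E)
    (L0 L1 : ℝ) (hL0 : 0 ≤ L0) (hL1 : 0 ≤ L1)
    (γ ρ : ℝ) (hγ : 0 < γ) (hρ : 0 < ρ)
    (hγL0 : γ * L0 ≤ 1) (hγρ : 2 * L1 * (γ * ρ) ≤ 1)
    (ζ : ℝ) (hζ : ∀ z : E, Dstar z ≤ ζ * ‖z‖) (hζ0 : 0 ≤ ζ)
    (z D w : E)
    (hdesc : L1 * Nm (w - z) ≤ 1 →
      f w ≤ f z + ⟪f' z, w - z⟫ + (L0 + L1 * Dstar (f' z)) / 2 * (Nm (w - z)) ^ 2)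
    (hw : w = z - (γ * min ρ ⟪D, -lmo D⟫) • (-lmo D)) :
    f w + γ / 4 * (min ρ (Dstar (f' z)) * Dstar (f' z))
      ≤ f z + 2 * γ * ρ * (ζ * ‖D - f' z‖) := by
  set v : E := -lmo D with hv
  set a : ℝ := Dstar D with hadef
  have hDv : ⟪D, v⟫ = a := by rw [hv, inner_neg_right, hlmo_eq]; ring
  set η : ℝ := min ρ a with hηdef
  set c : ℝ := ζ * ‖D - f' z‖ with hcdef
  set b : ℝ := Dstar (f' z) with hbdef
  have hw' : w = z - (γ * η) • v := by rw [hw, hDv]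
  clear_value v a η c b
  clear hw
  have ha0 : 0 ≤ a := hadef ▸ hD0 _
  have hb0 : 0 ≤ b := hbdef ▸ hD0 _
  have hc0 : 0 ≤ c := hcdef ▸ mul_nonneg hζ0 (norm_nonneg _)
  have hη0 : 0 ≤ η := hηdef ▸ le_min hρ.le ha0
  have hηρ : η ≤ ρ := hηdef ▸ min_le_left _ _
  have hηa : η ≤ a := hηdef ▸ min_le_right _ _
  have hNv1 : Nm v ≤ 1 := by
    have h1 : v = (-1 : ℝ) • lmo D := by rw [hv]; simp
    rw [h1, hNmsmul]; simpa using hlmo1 D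
  have hNv0 : 0 ≤ Nm v := hNm_nonneg v
  have hwz : w - z = -((γ * η) • v) := by
    rw [hw']; exact sub_sub_cancel_left _ _
  have hNwz : Nm (w - z) = γ * η * Nm v := by
    rw [hwz, ← neg_smul, hNmsmul, abs_neg, abs_of_nonneg (by positivity)]
  have hNwzρ : Nm (w - z) ≤ γ * ρ := by
    rw [hNwz]
    nlinarith [mul_nonneg hγ.le hη0]
  have hcond : L1 * Nm (w - z) ≤ 1 := by
    have := mul_le_mul_of_nonneg_left hNwzρ hL1
    nlinarith [hNm_nonneg (w - z)]
  have hdesck := hdesc hcond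
  have hinner : ⟪f' z, w - z⟫ ≤ γ * η * c - γ * η * a := by
    rw [hwz, inner_neg_right, real_inner_smul_right]
    have h2 : ⟪D - f' z, v⟫ ≤ Dstar (D - f' z) := hDle _ _ hNv1
    have h3 : Dstar (D - f' z) ≤ c := hcdef ▸ hζ _
    have h4 : a - c ≤ ⟪f' z, v⟫ := by
      have h1 : ⟪f' z, v⟫ = ⟪D, v⟫ - ⟪D - f' z, v⟫ := by
        rw [inner_sub_left]; ring
      rw [h1, hDv]; linarith
    nlinarith [mul_le_mul_of_nonneg_left h4 (mul_nonneg hγ.le hη0)]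
  have hbac : b ≤ a + c := by
    have h1 : f' z = D + -(D - f' z) := by abel
    have h2 := hDadd D (-(D - f' z))
    have h3 : Dstar (-(D - f' z)) ≤ c := by
      have := hζ (-(D - f' z))
      rw [norm_neg, ← hcdef] at this
      exact this
    calc b = Dstar (D + -(D - f' z)) := by rw [hbdef, ← h1]
      _ ≤ a + c := by rw [hadef]; linarith
  have hquad : (L0 + L1 * b) / 2 * (Nm (w - z)) ^ 2 ≤ 3 / 4 * (γ * η * a) + 1 / 4 * (γ * η * c) := by
    have h1 : (Nm (w - z)) ^ 2 ≤ (γ * η) ^ 2 := by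
      rw [hNwz]
      nlinarith [mul_self_le_mul_self hNv0 hNv1, sq_nonneg (γ * η), mul_nonneg hγ.le hη0]
    have h2 : (L0 + L1 * b) / 2 * (Nm (w - z)) ^ 2 ≤ (L0 + L1 * b) / 2 * (γ * η) ^ 2 := by
      apply mul_le_mul_of_nonneg_left h1
      positivity
    have hL0' : L0 * (γ * η) ^ 2 ≤ γ * η * η := by
      nlinarith [mul_le_mul_of_nonneg_right hγL0 (mul_nonneg hγ.le (mul_nonneg hη0 hη0))]
    have hL1γη : 2 * L1 * (γ * η) ≤ 1 := by
      have := mul_le_mul_of_nonneg_left hηρ (by positivity : (0:ℝ) ≤ 2 * L1 * γ)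
      nlinarith
    have hL1' : L1 * b * (γ * η) ^ 2 ≤ γ * η * b / 2 := by
      nlinarith [mul_le_mul_of_nonneg_right hL1γη
        (mul_nonneg (mul_nonneg hγ.le hη0) hb0)]
    have h3 : γ * η * η ≤ γ * η * a := by
      nlinarith [mul_le_mul_of_nonneg_left hηa (mul_nonneg hγ.le hη0)]
    have h4 : γ * η * b ≤ γ * η * a + γ * η * c := by
      nlinarith [mul_le_mul_of_nonneg_left hbac (mul_nonneg hγ.le hη0)]
    nlinarith [h2, hL0', hL1', h3, h4]
  have hηc : γ * η * c ≤ γ * ρ * c := by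
    nlinarith [mul_nonneg (mul_nonneg hγ.le (sub_nonneg.2 hηρ)) hc0]
  have hkey : min ρ b * b ≤ η * a + 3 * (ρ * c) := by
    have := ggnc_aux_h_mono ρ a b c hρ ha0 hb0 hc0 hbac
    rw [← hηdef] at this
    linarith
  have hfinal : f w ≤ f z - γ / 4 * (η * a) + 5 / 4 * (γ * ρ * c) := by
    nlinarith [hdesck, hinner, hquad, hηc]
  have hkey' : γ / 4 * (min ρ b * b) ≤ γ / 4 * (η * a + 3 * (ρ * c)) :=
    mul_le_mul_of_nonneg_left hkey (by positivity)
  nlinarith [hfinal, hkey']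
theorem GGNC_stochastic_rate
    {E : Type*} [NormedAddCommGroup E] [InnerProductSpace ℝ E] [FiniteDimensional ℝ E]
    {Ω : Type*} {mΩ : MeasurableSpace Ω} (μ : Measure Ω) [IsProbabilityMeasure μ]
    (ℱ : Filtration ℕ mΩ)
    -- the (possibly non-Euclidean) norm `‖·‖` on `E` (`‖·‖₂` is the inner-product norm)
    (Nm : E → ℝ)
    (hNm0 : Nm 0 = 0)
    (hNmpos : ∀ z : E, z ≠ 0 → 0 < Nm z)
    (hNmsmul : ∀ (a : ℝ) (z : E), Nm (a • z) = |a| * Nm z)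
    (hNmadd : ∀ z w : E, Nm (z + w) ≤ Nm z + Nm w)
    -- the dual norm `‖d‖_* = sup {⟨d,x⟩ : ‖x‖ ≤ 1}`
    (Dstar : E → ℝ)
    (hDstar : ∀ d : E, IsLUB ((fun z => ⟪d, z⟫) '' {z : E | Nm z ≤ 1}) (Dstar d))
    -- the lmo: `lmo(d) ∈ argmin {⟨d,x⟩ : ‖x‖ ≤ 1}`, so `⟨d, lmo(d)⟩ = −‖d‖_*`
    (lmo : E → E)
    (hlmo : ∀ d : E, Nm (lmo d) ≤ 1 ∧ ∀ z : E, Nm z ≤ 1 → ⟪d, lmo d⟫ ≤ ⟪d, z⟫)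
    (hlmo_eq : ∀ d : E, ⟪d, lmo d⟫ = -(Dstar d))
    -- `f` differentiable with gradient `f'`
    (f : E → ℝ) (f' : E → E)
    (hdiff : ∀ z, HasGradientAt f (f' z) z)
    -- `(L₀,L₁)`-smoothness (the condition `‖x−y‖ ≤ 1/L₁` is encoded as `L₁‖x−y‖ ≤ 1`)
    (L0 L1 : ℝ) (hL0 : 0 ≤ L0) (hL1 : 0 ≤ L1)
    (hsmooth : ∀ z w : E, L1 * Nm (z - w) ≤ 1 →
      Dstar (f' z - f' w) ≤ (L0 + L1 * Dstar (f' z)) * Nm (z - w))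
    (hdesc : ∀ z w : E, L1 * Nm (w - z) ≤ 1 →
      f w ≤ f z + ⟪f' z, w - z⟫ + (L0 + L1 * Dstar (f' z)) / 2 * (Nm (w - z)) ^ 2)
    -- `f* = inf f > -∞`
    (fstar : ℝ) (hfstar : IsGLB (Set.range f) fstar)
    (n : ℕ) (hn : 1 ≤ n)
    -- parameters: `γ ≤ 1/L₀`, `γρ ≤ 1/(2L₁)`
    (γ ρ σ : ℝ) (hγ : 0 < γ) (hρ : 0 < ρ) (hσ : 0 ≤ σ)
    (hγL0 : γ * L0 ≤ 1) (hγρ : 2 * L1 * (γ * ρ) ≤ 1)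
    (α : ℕ → ℝ) (hα : ∀ k, 1 ≤ k → 0 < α k ∧ α k ≤ 1)
    -- the iterates, momentum estimator and stochastic gradients
    (x d g : ℕ → Ω → E)
    (x1 : E) (hx1 : ∀ ω, x 1 ω = x1)
    (hd0 : ∀ ω, d 0 ω = 0)
    (hd : ∀ k, 1 ≤ k → ∀ ω, d k ω = α k • g k ω + (1 - α k) • d (k - 1) ω)
    (hx : ∀ (k : ℕ) (ω : Ω), x (k + 1) ω =
      x k ω - (γ * min ρ ⟪d k ω, -lmo (d k ω)⟫) • (-lmo (d k ω)))
    -- the filtration is generated by the iterates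
    (hx_adapted : ∀ k, StronglyMeasurable[ℱ k] (x k))
    (hd_adapted : ∀ k, StronglyMeasurable[ℱ (k + 1)] (d k))
    -- the stochastic gradient is conditionally unbiased with variance at most `σ²`
    (hg_unbiased : ∀ k, 1 ≤ k → μ[g k | ℱ k] =ᵐ[μ] fun ω => f' (x k ω))
    (hg_var : ∀ k, 1 ≤ k →
      ∀ᵐ ω ∂μ, (μ[fun ω' => ‖g k ω' - f' (x k ω')‖ ^ 2 | ℱ k]) ω ≤ σ ^ 2)
    -- integrability of the quantities appearing in the statement
    (herrint : ∀ k, Integrable (fun ω => ‖d k ω - f' (x k ω)‖ ^ 2) μ)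
    (hgradint : ∀ k, Integrable (fun ω => Dstar (f' (x k ω))) μ)
    (hfint : ∀ k, Integrable (fun ω => f (x k ω)) μ)
    -- the norm-equivalence constant `ζ = sup ‖·‖_*/‖·‖₂`
    (ζ : ℝ) (hζ : ∀ z : E, Dstar z ≤ ζ * ‖z‖)
    -- the stochastic error term `ε_n`
    (εn : ℝ)
    (hεn : εn = (1 / (n : ℝ)) * ∑ k ∈ Finset.Icc 1 n,
      (7 / 4 * ρ * ζ * Real.sqrt (∫ ω, ‖d k ω - f' (x k ω)‖ ^ 2 ∂μ)
        + ζ / 4 * ∫ ω, ‖d k ω - f' (x k ω)‖ ^ 2 ∂μ)) :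
    (1 / (n : ℝ)) * ∑ k ∈ Finset.Icc 1 n, ∫ ω, Dstar (f' (x k ω)) ∂μ
      ≤ 4 * Real.sqrt (f x1 - fstar) / Real.sqrt (γ * n)
        + 8 * (f x1 - fstar) / (γ * ρ * n)
        + 4 * Real.sqrt εn + 8 * εn / ρ := by
  classical
  have hNm_nonneg : ∀ z : E, 0 ≤ Nm z := by
    intro z
    rcases eq_or_ne z 0 with h | h
    · simp [h, hNm0]
    · exact (hNmpos z h).le
  have hDle : ∀ u w : E, Nm w ≤ 1 → ⟪u, w⟫ ≤ Dstar u := fun u w hw =>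
    (hDstar u).1 ⟨w, hw, rfl⟩
  have hD0 : ∀ u : E, 0 ≤ Dstar u := by
    intro u
    have := hDle u 0 (by rw [hNm0]; norm_num)
    simpa using this
  have hDadd : ∀ u v : E, Dstar (u + v) ≤ Dstar u + Dstar v := by
    intro u v
    apply (hDstar (u + v)).2
    rintro y ⟨w, hw, rfl⟩
    have h1 := hDle u w hw
    have h2 := hDle v w hw
    simp only [inner_add_left]
    linarith
  have hΔ0 : (0:ℝ) ≤ f x1 - fstar := by
    have : fstar ≤ f x1 := hfstar.1 ⟨x1, rfl⟩
    linarith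
  have hN : (0:ℝ) < (n:ℝ) := by
    have : (1:ℝ) ≤ (n:ℝ) := by exact_mod_cast hn
    linarith
  rcases lt_or_ge ζ 0 with hζneg | hζ0
  · -- degenerate case: E is trivial
    have hzero : ∀ z : E, z = 0 := by
      intro z
      by_contra h
      have h1 : 0 < Nm z := hNmpos z h
      have hu : Nm ((Nm z)⁻¹ • z) ≤ 1 := by
        rw [hNmsmul, abs_of_pos (inv_pos.2 h1), inv_mul_cancel₀ h1.ne']
      have h2 : ⟪z, (Nm z)⁻¹ • z⟫ ≤ Dstar z := hDle _ _ hu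
      have h3 : Dstar z ≤ ζ * ‖z‖ := hζ z
      have h4 : ζ * ‖z‖ < 0 := mul_neg_of_neg_of_pos hζneg (norm_pos_iff.2 h)
      have h5 : 0 < ⟪z, (Nm z)⁻¹ • z⟫ := by
        rw [real_inner_smul_right, real_inner_self_eq_norm_sq]
        exact mul_pos (inv_pos.2 h1) (pow_pos (norm_pos_iff.2 h) 2)
      linarith
    have hDall : ∀ u : E, Dstar u = 0 := by
      intro u
      have h := hlmo_eq 0
      rw [inner_zero_left] at h
      rw [hzero u]
      linarith
    have hLHS : ∑ k ∈ Finset.Icc 1 n, ∫ ω, Dstar (f' (x k ω)) ∂μ = 0 := by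
      apply Finset.sum_eq_zero
      intro k _
      simp [hDall]
    have hε0 : εn = 0 := by
      rw [hεn]
      have : ∀ k ∈ Finset.Icc 1 n,
          (7 / 4 * ρ * ζ * Real.sqrt (∫ ω, ‖d k ω - f' (x k ω)‖ ^ 2 ∂μ)
            + ζ / 4 * ∫ ω, ‖d k ω - f' (x k ω)‖ ^ 2 ∂μ) = 0 := by
        intro k _
        have hz : ∀ ω, ‖d k ω - f' (x k ω)‖ ^ 2 = 0 := by
          intro ω
          rw [hzero (d k ω - f' (x k ω))]
          simp
        simp [hz]
      rw [Finset.sum_congr rfl this]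
      simp
    rw [hLHS, hε0]
    have h1 : (0:ℝ) ≤ 4 * Real.sqrt (f x1 - fstar) / Real.sqrt (γ * ↑n) := by positivity
    have h2 : (0:ℝ) ≤ 8 * (f x1 - fstar) / (γ * ρ * ↑n) := by
      apply div_nonneg (by linarith)
      positivity
    simp only [mul_zero, Real.sqrt_zero, zero_div]
    linarith
  · -- main case: 0 ≤ ζ
    have hstep : ∀ (k : ℕ) (ω : Ω), f (x (k+1) ω)
        + γ / 4 * (min ρ (Dstar (f' (x k ω))) * Dstar (f' (x k ω)))
        ≤ f (x k ω) + 2 * γ * ρ * (ζ * ‖d k ω - f' (x k ω)‖) := fun k ω =>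
      ggnc_step Nm hNm_nonneg hNmsmul Dstar hDle hD0 hDadd lmo (fun u => (hlmo u).1) hlmo_eq
        f f' L0 L1 hL0 hL1 γ ρ hγ hρ hγL0 hγρ ζ hζ hζ0 (x k ω) (d k ω) (x (k+1) ω)
        (hdesc _ _) (hx k ω)
    have hb_aesm : ∀ k, AEStronglyMeasurable (fun ω => Dstar (f' (x k ω))) μ :=
      fun k => (hgradint k).aestronglyMeasurable
    have hh_int : ∀ k, Integrable
        (fun ω => min ρ (Dstar (f' (x k ω))) * Dstar (f' (x k ω))) μ := by
      intro k
      have hcont : Continuous (fun t : ℝ => min ρ t * t) :=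
        (continuous_const.min continuous_id).mul continuous_id
      apply Integrable.mono' ((hgradint k).const_mul ρ)
        (hcont.comp_aestronglyMeasurable (hb_aesm k))
      filter_upwards with ω
      have h0 := hD0 (f' (x k ω))
      rw [Real.norm_eq_abs, abs_of_nonneg (mul_nonneg (le_min hρ.le h0) h0)]
      exact mul_le_mul_of_nonneg_right (min_le_left _ _) h0
    have hh0 : ∀ k, 0 ≤ ∫ ω, min ρ (Dstar (f' (x k ω))) * Dstar (f' (x k ω)) ∂μ :=
      fun k => integral_nonneg fun ω => mul_nonneg (le_min hρ.le (hD0 _)) (hD0 _)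
    have hl_aesm : ∀ k, AEStronglyMeasurable (fun ω => ‖d k ω - f' (x k ω)‖) μ := by
      intro k
      have h2 := Real.continuous_sqrt.comp_aestronglyMeasurable (herrint k).aestronglyMeasurable
      refine h2.congr ?_
      filter_upwards with ω
      exact Real.sqrt_sq (norm_nonneg _)
    have hl_int : ∀ k, Integrable (fun ω => ‖d k ω - f' (x k ω)‖) μ := by
      intro k
      apply Integrable.mono' ((integrable_const (1:ℝ)).add (herrint k)) (hl_aesm k)
      filter_upwards with ω
      simp only [Pi.add_apply]
      rw [Real.norm_eq_abs, abs_of_nonneg (norm_nonneg _)]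
      nlinarith [sq_nonneg (‖d k ω - f' (x k ω)‖ - 1)]
    have hElam : ∀ k, ∫ ω, ‖d k ω - f' (x k ω)‖ ∂μ
        ≤ Real.sqrt (∫ ω, ‖d k ω - f' (x k ω)‖ ^ 2 ∂μ) := fun k =>
      ggnc_aux_EX_le_sqrt μ _ (hl_aesm k)
        (integral_nonneg fun ω => norm_nonneg _) (herrint k)
    have hIntStep : ∀ k : ℕ, ∫ ω, f (x (k+1) ω) ∂μ
        + γ / 4 * ∫ ω, min ρ (Dstar (f' (x k ω))) * Dstar (f' (x k ω)) ∂μ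
        ≤ ∫ ω, f (x k ω) ∂μ
          + 2 * γ * ρ * ζ * ∫ ω, ‖d k ω - f' (x k ω)‖ ∂μ := by
      intro k
      have hmono : ∫ ω, (f (x (k+1) ω)
            + γ / 4 * (min ρ (Dstar (f' (x k ω))) * Dstar (f' (x k ω)))) ∂μ
          ≤ ∫ ω, (f (x k ω) + 2 * γ * ρ * ζ * ‖d k ω - f' (x k ω)‖) ∂μ := by
        apply integral_mono
          ((hfint (k+1)).add ((hh_int k).const_mul (γ/4)))
          ((hfint k).add ((hl_int k).const_mul (2*γ*ρ*ζ)))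
        intro ω
        have := hstep k ω
        simp only [Pi.add_apply]
        linarith
      rw [integral_add (hfint (k+1)) ((hh_int k).const_mul _),
        integral_add (hfint k) ((hl_int k).const_mul _),
        integral_const_mul, integral_const_mul] at hmono
      exact hmono
    have htel : ∀ m : ℕ, ∫ ω, f (x (m+1) ω) ∂μ
        + ∑ k ∈ Finset.Icc 1 m, (γ/4 * ∫ ω, min ρ (Dstar (f' (x k ω))) * Dstar (f' (x k ω)) ∂μ)
        ≤ f x1 + ∑ k ∈ Finset.Icc 1 m, (2*γ*ρ*ζ * ∫ ω, ‖d k ω - f' (x k ω)‖ ∂μ) := by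
      intro m
      induction m with
      | zero =>
        rw [Finset.Icc_eq_empty (by norm_num : ¬(1:ℕ) ≤ 0)]
        simp only [Finset.sum_empty, add_zero, Nat.zero_add]
        have h1 : ∫ ω, f (x 1 ω) ∂μ = f x1 := by
          have h2 : (fun ω => f (x 1 ω)) = fun _ => f x1 := by
            funext ω; rw [hx1]
          rw [h2, integral_const]
          simp
        rw [h1]
      | succ m ih =>
        rw [Finset.sum_Icc_succ_top (Nat.le_add_left 1 m),
          Finset.sum_Icc_succ_top (Nat.le_add_left 1 m)]
        have h1 := hIntStep (m+1)
        linarith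
    have hfs : fstar ≤ ∫ ω, f (x (n+1) ω) ∂μ := by
      have h1 := integral_mono (integrable_const fstar) (hfint (n+1))
        (fun ω => hfstar.1 ⟨x (n+1) ω, rfl⟩)
      simpa using h1
    set T := ∑ k ∈ Finset.Icc 1 n, ∫ ω, min ρ (Dstar (f' (x k ω))) * Dstar (f' (x k ω)) ∂μ
      with hTdef
    set W := ∑ k ∈ Finset.Icc 1 n,
      Real.sqrt (∫ ω, ‖d k ω - f' (x k ω)‖ ^ 2 ∂μ) with hWdef
    set Q := ∑ k ∈ Finset.Icc 1 n, ∫ ω, ‖d k ω - f' (x k ω)‖ ^ 2 ∂μ with hQdef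
    have hT0 : 0 ≤ T := Finset.sum_nonneg fun k _ => hh0 k
    have hW0 : 0 ≤ W := Finset.sum_nonneg fun k _ => Real.sqrt_nonneg _
    have hQ0 : 0 ≤ Q := Finset.sum_nonneg fun k _ => integral_nonneg fun ω => sq_nonneg _
    have hγT : γ/4 * T ≤ (f x1 - fstar) + 2*γ*ρ*ζ * W := by
      have h1 := htel n
      rw [← Finset.mul_sum, ← hTdef] at h1
      have h3 : ∑ k ∈ Finset.Icc 1 n, (2*γ*ρ*ζ * ∫ ω, ‖d k ω - f' (x k ω)‖ ∂μ)
          ≤ 2*γ*ρ*ζ * W := by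
        rw [hWdef, Finset.mul_sum]
        apply Finset.sum_le_sum
        intro k _
        exact mul_le_mul_of_nonneg_left (hElam k) (by positivity)
      linarith [hfs]
    have hnε : (n:ℝ) * εn = 7/4*ρ*ζ*W + ζ/4*Q := by
      have hsum : ∑ k ∈ Finset.Icc 1 n,
          (7 / 4 * ρ * ζ * Real.sqrt (∫ ω, ‖d k ω - f' (x k ω)‖ ^ 2 ∂μ)
            + ζ / 4 * ∫ ω, ‖d k ω - f' (x k ω)‖ ^ 2 ∂μ)
          = 7/4*ρ*ζ*W + ζ/4*Q := by
        rw [Finset.sum_add_distrib, hWdef, hQdef, Finset.mul_sum, Finset.mul_sum]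
      rw [hεn, hsum, ← mul_assoc, mul_one_div, div_self hN.ne', one_mul]
    have hεn0 : 0 ≤ εn := by
      have h1 : 0 ≤ 7/4*ρ*ζ*W + ζ/4*Q := by
        have h2 := mul_nonneg hζ0 hQ0
        have h3 := mul_nonneg (mul_nonneg (mul_nonneg (by norm_num : (0:ℝ) ≤ 7/4) hρ.le) hζ0) hW0
        linarith
      nlinarith [hnε, hN]
    have hWε : ρ*ζ*W ≤ 4/7 * ((n:ℝ) * εn) := by
      have h2 := mul_nonneg hζ0 hQ0
      linarith [hnε]
    have hsqh_int : ∀ k, Integrable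
        (fun ω => Real.sqrt (min ρ (Dstar (f' (x k ω))) * Dstar (f' (x k ω)))) μ := by
      intro k
      apply Integrable.mono' ((integrable_const (1:ℝ)).add (hh_int k))
        (Real.continuous_sqrt.comp_aestronglyMeasurable (hh_int k).aestronglyMeasurable)
      filter_upwards with ω
      rw [Real.norm_eq_abs, abs_of_nonneg (Real.sqrt_nonneg _)]
      simp only [Pi.add_apply]
      have h0 : 0 ≤ min ρ (Dstar (f' (x k ω))) * Dstar (f' (x k ω)) :=
        mul_nonneg (le_min hρ.le (hD0 _)) (hD0 _)
      nlinarith [Real.sq_sqrt h0,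
        Real.sqrt_nonneg (min ρ (Dstar (f' (x k ω))) * Dstar (f' (x k ω)))]
    have hEb : ∀ k, ∫ ω, Dstar (f' (x k ω)) ∂μ
        ≤ Real.sqrt (∫ ω, min ρ (Dstar (f' (x k ω))) * Dstar (f' (x k ω)) ∂μ)
          + (∫ ω, min ρ (Dstar (f' (x k ω))) * Dstar (f' (x k ω)) ∂μ) / ρ := by
      intro k
      have h1 : ∫ ω, Dstar (f' (x k ω)) ∂μ
          ≤ ∫ ω, (Real.sqrt (min ρ (Dstar (f' (x k ω))) * Dstar (f' (x k ω)))
            + (min ρ (Dstar (f' (x k ω))) * Dstar (f' (x k ω))) / ρ) ∂μ := by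
        apply integral_mono (hgradint k) ((hsqh_int k).add ((hh_int k).div_const ρ))
        intro ω
        simpa using ggnc_aux_t_le ρ (Dstar (f' (x k ω))) hρ (hD0 _)
      rw [integral_add (hsqh_int k) ((hh_int k).div_const ρ), integral_div] at h1
      have h3 : Integrable
          (fun ω => (Real.sqrt (min ρ (Dstar (f' (x k ω))) * Dstar (f' (x k ω)))) ^ 2) μ := by
        apply (hh_int k).congr
        filter_upwards with ω
        exact (Real.sq_sqrt (mul_nonneg (le_min hρ.le (hD0 _)) (hD0 _))).symm
      have h4 := ggnc_aux_EX_le_sqrt μ _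
        (Real.continuous_sqrt.comp_aestronglyMeasurable (hh_int k).aestronglyMeasurable)
        (integral_nonneg fun ω => Real.sqrt_nonneg _) h3
      have h5 : ∫ ω, (Real.sqrt (min ρ (Dstar (f' (x k ω))) * Dstar (f' (x k ω)))) ^ 2 ∂μ
          = ∫ ω, min ρ (Dstar (f' (x k ω))) * Dstar (f' (x k ω)) ∂μ := by
        apply integral_congr_ae
        filter_upwards with ω
        exact Real.sq_sqrt (mul_nonneg (le_min hρ.le (hD0 _)) (hD0 _))
      rw [h5] at h4
      linarith
    have hPsum : ∑ k ∈ Finset.Icc 1 n, ∫ ω, Dstar (f' (x k ω)) ∂μ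
        ≤ Real.sqrt ((n:ℝ) * T) + T / ρ := by
      have h1 : ∑ k ∈ Finset.Icc 1 n, ∫ ω, Dstar (f' (x k ω)) ∂μ
          ≤ ∑ k ∈ Finset.Icc 1 n,
            (Real.sqrt (∫ ω, min ρ (Dstar (f' (x k ω))) * Dstar (f' (x k ω)) ∂μ)
              + (∫ ω, min ρ (Dstar (f' (x k ω))) * Dstar (f' (x k ω)) ∂μ) / ρ) :=
        Finset.sum_le_sum fun k _ => hEb k
      rw [Finset.sum_add_distrib, ← Finset.sum_div, ← hTdef] at h1
      have h2 : ∑ k ∈ Finset.Icc 1 n,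
          Real.sqrt (∫ ω, min ρ (Dstar (f' (x k ω))) * Dstar (f' (x k ω)) ∂μ)
          ≤ Real.sqrt ((n:ℝ) * T) := by
        have h3 := sq_sum_le_card_mul_sum_sq (s := Finset.Icc 1 n)
          (f := fun k => Real.sqrt (∫ ω, min ρ (Dstar (f' (x k ω))) * Dstar (f' (x k ω)) ∂μ))
        have h4 : ∑ k ∈ Finset.Icc 1 n,
            (Real.sqrt (∫ ω, min ρ (Dstar (f' (x k ω))) * Dstar (f' (x k ω)) ∂μ)) ^ 2 = T := by
          rw [hTdef]
          exact Finset.sum_congr rfl fun k _ => Real.sq_sqrt (hh0 k)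
        have h5 : ((Finset.Icc 1 n).card : ℝ) = (n:ℝ) := by
          rw [Nat.card_Icc]; simp
        rw [h4, h5] at h3
        calc ∑ k ∈ Finset.Icc 1 n,
            Real.sqrt (∫ ω, min ρ (Dstar (f' (x k ω))) * Dstar (f' (x k ω)) ∂μ)
            = Real.sqrt ((∑ k ∈ Finset.Icc 1 n,
              Real.sqrt (∫ ω, min ρ (Dstar (f' (x k ω))) * Dstar (f' (x k ω)) ∂μ)) ^ 2) :=
            (Real.sqrt_sq (Finset.sum_nonneg fun k _ => Real.sqrt_nonneg _)).symm
          _ ≤ Real.sqrt ((n:ℝ) * T) := Real.sqrt_le_sqrt h3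
      linarith
    -- final arithmetic
    have hTbound : T ≤ 4*(f x1 - fstar)/γ + 32/7*((n:ℝ)*εn) := by
      have h1 : γ * T ≤ 4*(f x1 - fstar) + 32/7*γ*((n:ℝ)*εn) := by
        nlinarith [hγT, mul_le_mul_of_nonneg_left hWε (by positivity : (0:ℝ) ≤ 2*γ)]
      have h2 : γ * (4*(f x1 - fstar)/γ) = 4*(f x1 - fstar) := by field_simp
      nlinarith [h1, h2, hγ]
    have hTn : T/(n:ℝ) ≤ 4*(f x1 - fstar)/(γ*(n:ℝ)) + 32/7*εn := by
      calc T/(n:ℝ) = T * (n:ℝ)⁻¹ := div_eq_mul_inv _ _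
        _ ≤ (4*(f x1 - fstar)/γ + 32/7*((n:ℝ)*εn)) * (n:ℝ)⁻¹ :=
          mul_le_mul_of_nonneg_right hTbound (inv_nonneg.2 hN.le)
        _ = 4*(f x1 - fstar)/(γ*(n:ℝ)) + 32/7*εn := by
          field_simp
    have hsqrtNT : (1/(n:ℝ)) * Real.sqrt ((n:ℝ)*T) = Real.sqrt (T/(n:ℝ)) := by
      rw [Real.sqrt_mul hN.le, Real.sqrt_div hT0]
      have hsn : 0 < Real.sqrt (n:ℝ) := Real.sqrt_pos.2 hN
      have hss := Real.mul_self_sqrt hN.le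
      rw [eq_div_iff hsn.ne']
      field_simp
      linear_combination Real.sqrt T * hss
    have hsqb : Real.sqrt (T/(n:ℝ))
        ≤ 4*Real.sqrt (f x1 - fstar)/Real.sqrt (γ*(n:ℝ)) + 4*Real.sqrt εn := by
      have h1 : Real.sqrt (T/(n:ℝ))
          ≤ Real.sqrt (4*(f x1 - fstar)/(γ*(n:ℝ)) + 32/7*εn) := Real.sqrt_le_sqrt hTn
      have h2 := ggnc_aux_sqrt_add (4*(f x1 - fstar)/(γ*(n:ℝ))) (32/7*εn)
        (div_nonneg (by linarith) (by positivity)) (by nlinarith [hεn0])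
      have h3 : Real.sqrt (4*(f x1 - fstar)/(γ*(n:ℝ)))
          = 2*Real.sqrt (f x1 - fstar)/Real.sqrt (γ*(n:ℝ)) := by
        rw [Real.sqrt_div (by linarith : (0:ℝ) ≤ 4*(f x1 - fstar)),
          show (4:ℝ)*(f x1 - fstar) = 2^2*(f x1 - fstar) by norm_num,
          Real.sqrt_mul (by norm_num : (0:ℝ) ≤ (2:ℝ)^2),
          Real.sqrt_sq (by norm_num : (0:ℝ) ≤ (2:ℝ))]
      have h4 : Real.sqrt (32/7*εn) ≤ 4*Real.sqrt εn := by
        rw [Real.sqrt_mul (by norm_num : (0:ℝ) ≤ 32/7)]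
        have h5 : Real.sqrt (32/7) ≤ 4 := by
          rw [show (4:ℝ) = Real.sqrt 16 by
            rw [show (16:ℝ) = 4^2 by norm_num, Real.sqrt_sq (by norm_num : (0:ℝ) ≤ (4:ℝ))]]
          exact Real.sqrt_le_sqrt (by norm_num)
        exact mul_le_mul_of_nonneg_right h5 (Real.sqrt_nonneg _)
      have h6 : 2*Real.sqrt (f x1 - fstar)/Real.sqrt (γ*(n:ℝ))
          ≤ 4*Real.sqrt (f x1 - fstar)/Real.sqrt (γ*(n:ℝ)) := by
        have hpos : 0 < Real.sqrt (γ*(n:ℝ)) := Real.sqrt_pos.2 (by positivity)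
        apply (div_le_div_iff_of_pos_right hpos).mpr
        nlinarith [Real.sqrt_nonneg (f x1 - fstar)]
      linarith
    have hρn : 0 < γ * ρ * (n:ℝ) := mul_pos (mul_pos hγ hρ) hN
    have hdivρ : (T/(n:ℝ))/ρ ≤ 8*(f x1 - fstar)/(γ*ρ*(n:ℝ)) + 8*εn/ρ := by
      have h1 : (T/(n:ℝ))/ρ ≤ (4*(f x1 - fstar)/(γ*(n:ℝ)) + 32/7*εn)/ρ :=
        (div_le_div_iff_of_pos_right hρ).mpr hTn
      have h2 : (4*(f x1 - fstar)/(γ*(n:ℝ)) + 32/7*εn)/ρ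
          = 4*(f x1 - fstar)/(γ*ρ*(n:ℝ)) + (32/7)*εn/ρ := by
        field_simp
      have h3 : 4*(f x1 - fstar)/(γ*ρ*(n:ℝ)) ≤ 8*(f x1 - fstar)/(γ*ρ*(n:ℝ)) := by
        apply (div_le_div_iff_of_pos_right hρn).mpr
        linarith
      have h4 : (32/7)*εn/ρ ≤ 8*εn/ρ := by
        apply (div_le_div_iff_of_pos_right hρ).mpr
        linarith
      linarith [h1, h2.le, h2.ge]
    have hfinal1 : (1/(n:ℝ)) * ∑ k ∈ Finset.Icc 1 n, ∫ ω, Dstar (f' (x k ω)) ∂μ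
        ≤ (1/(n:ℝ)) * (Real.sqrt ((n:ℝ)*T) + T/ρ) :=
      mul_le_mul_of_nonneg_left hPsum (by positivity)
    have hfinal2 : (1/(n:ℝ)) * (Real.sqrt ((n:ℝ)*T) + T/ρ)
        = (1/(n:ℝ)) * Real.sqrt ((n:ℝ)*T) + (T/(n:ℝ))/ρ := by
      field_simp
    rw [hfinal2, hsqrtNT] at hfinal1
    linarith [hfinal1, hsqb, hdivρ]
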